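/- Let H, (e_k), (λ_k), E, ‖·‖_s be as in the context. For every η ∈ [0, 1/2] there exists a constant C = C(η) such that for all 0 ≤ s ≤ t and all v ∈ H with ‖v‖_{−2η} < ∞ (i.e. ‖A^{-η}v‖ < ∞), ∫₀^s ‖(E(t−σ) − E(s−σ)) v‖² dσ ≤ C (t−s)^{1−2η} ‖A^{-η} v‖². -/

import Mathlib

open MeasureTheory
open scoped RealInnerProductSpace ENNReal

private lemma memLp2 (a : ℕ → ℝ) (ha : Summable fun k => a k ^ 2) : Memℓp a 2 := by
  apply memℓp_gen
  have h : (fun i => ‖a i‖ ^ (2 : ℝ≥0∞).toReal) = fun i => a i ^ 2 := by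
    funext i
    rw [show ((2 : ℝ≥0∞).toReal) = ((2 : ℕ) : ℝ) by norm_num, Real.rpow_natCast]
    simp [sq_abs]
  rw [h]; exact ha

private lemma helper_hasSum {H : Type*} [NormedAddCommGroup H] [InnerProductSpace ℝ H]
    [CompleteSpace H] (e : HilbertBasis ℕ ℝ H) (a : ℕ → ℝ)
    (ha : Summable fun k => a k ^ 2) :
    HasSum (fun k => a k • e k) (e.repr.symm ⟨a, memLp2 a ha⟩) :=
  e.hasSum_repr_symm ⟨a, memLp2 a ha⟩

private lemma helper_norm {H : Type*} [NormedAddCommGroup H] [InnerProductSpace ℝ H]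
    [CompleteSpace H] (e : HilbertBasis ℕ ℝ H) (a : ℕ → ℝ)
    (ha : Summable fun k => a k ^ 2) :
    ‖∑' k, a k • e k‖ ^ 2 = ∑' k, a k ^ 2 := by
  rw [(helper_hasSum e a ha).tsum_eq, LinearIsometryEquiv.norm_map]
  have h := lp.norm_rpow_eq_tsum (p := 2) (by norm_num) (⟨a, memLp2 a ha⟩ : lp (fun _ : ℕ => ℝ) 2)
  have h2 : ((2 : ℝ≥0∞).toReal) = ((2 : ℕ) : ℝ) := by norm_num
  rw [h2, Real.rpow_natCast] at h
  rw [h]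
  apply tsum_congr
  intro i
  show ‖a i‖ ^ ((2:ℕ):ℝ) = a i ^ 2
  rw [Real.rpow_natCast]
  simp [sq_abs]

private lemma exp_integral_bound (L s : ℝ) (hL : 0 < L) :
    ∫ σ in (0:ℝ)..s, Real.exp (2*L*σ - 2*L*s) ≤ 1 / (2*L) := by
  have h2L : (0:ℝ) < 2*L := by linarith
  have hd : ∀ x ∈ Set.uIcc (0:ℝ) s,
      HasDerivAt (fun σ => Real.exp (2*L*σ - 2*L*s) / (2*L)) (Real.exp (2*L*x - 2*L*s)) x := by
    intro x _
    have h1 : HasDerivAt (fun σ : ℝ => 2*L*σ - 2*L*s) (2*L) x := by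
      simpa using ((hasDerivAt_id x).const_mul (2*L)).sub_const (2*L*s)
    have h3 := h1.exp.div_const (2*L)
    rwa [mul_div_assoc, div_self h2L.ne', mul_one] at h3
  have hci : IntervalIntegrable (fun x => Real.exp (2*L*x - 2*L*s)) volume 0 s :=
    (Real.continuous_exp.comp (by continuity)).intervalIntegrable _ _
  rw [intervalIntegral.integral_eq_sub_of_hasDerivAt hd hci]
  have h0 : 0 < Real.exp (2*L*0 - 2*L*s) / (2*L) := by positivity
  have h1 : Real.exp (2*L*s - 2*L*s) = 1 := by rw [sub_self, Real.exp_zero]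
  rw [h1]
  linarith

private lemma one_sub_exp_sq_le {α : ℝ} (hα0 : 0 ≤ α) (hα1 : α ≤ 1) {x : ℝ} (hx : 0 ≤ x) :
    (1 - Real.exp (-x))^2 ≤ x ^ α := by
  have h0 : 0 ≤ 1 - Real.exp (-x) := by
    have : Real.exp (-x) ≤ Real.exp 0 := Real.exp_le_exp.mpr (by linarith)
    rw [Real.exp_zero] at this; linarith
  have h3 : 1 - Real.exp (-x) ≤ x := by
    have := Real.add_one_le_exp (-x); linarith
  rcases le_or_gt x 1 with hx1 | hx1
  · rcases eq_or_lt_of_le hx with h | h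
    · rw [← h]; simp [Real.exp_zero]
      positivity
    · have hsq : (1 - Real.exp (-x))^2 ≤ x^2 := by nlinarith
      calc (1 - Real.exp (-x))^2 ≤ x^2 := hsq
        _ = x ^ (2:ℝ) := (Real.rpow_two x).symm
        _ ≤ x ^ α := Real.rpow_le_rpow_of_exponent_ge h hx1 (by linarith)
  · have hle1 : (1 - Real.exp (-x))^2 ≤ 1 := by
      have := Real.exp_pos (-x); nlinarith
    have : (1:ℝ) ≤ x ^ α := Real.one_le_rpow hx1.le hα0
    linarith

set_option maxHeartbeats 1000000 in
/-- The estimate of the term `I₂` in the proof of Theorem 5, in the diagonal setting: for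
`η ∈ [0,1/2]` there is `C = C(η)` such that for `0 ≤ s ≤ t` and `v` with `‖A^{-η}v‖ < ∞`,
`∫₀^s ‖(E(t−σ) − E(s−σ)) v‖² dσ ≤ C (t−s)^{1−2η} ‖A^{-η} v‖²`, where
`‖A^{-η}v‖² = ∑_k λ_k^{-2η} ⟨v,e_k⟩²`. -/
theorem stochastic_convolution_I2 {H : Type*} [NormedAddCommGroup H] [InnerProductSpace ℝ H]
    [CompleteSpace H]
    (e : HilbertBasis ℕ ℝ H) (lam : ℕ → ℝ)
    (hpos : ∀ k, 0 < lam k) (hmono : Monotone lam)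
    (htop : Filter.Tendsto lam Filter.atTop Filter.atTop)
    (E : ℝ → H → H)
    (hE : ∀ t v, E t v = ∑' k, (Real.exp (-t * lam k) * ⟪e k, v⟫) • e k)
    (η : ℝ) (hη0 : 0 ≤ η) (hη : η ≤ 1 / 2) :
    ∃ C : ℝ, 0 < C ∧ ∀ s t : ℝ, 0 ≤ s → s ≤ t → ∀ v : H,
      Summable (fun k => lam k ^ (-(2 * η)) * ⟪e k, v⟫ ^ 2) →
      ∫ σ in (0 : ℝ)..s, ‖E (t - σ) v - E (s - σ) v‖ ^ 2
        ≤ C * (t - s) ^ (1 - 2 * η) * ∑' k, lam k ^ (-(2 * η)) * ⟪e k, v⟫ ^ 2 := by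
  refine ⟨1, one_pos, ?_⟩
  intro s t hs hst v hsum
  have hα0 : 0 ≤ 1 - 2*η := by linarith
  have hα1 : 1 - 2*η ≤ 1 := by linarith
  have hcsum : Summable fun k => (⟪e k, v⟫ : ℝ) ^ 2 :=
    (e.summable_inner_mul_inner v v).congr
      (fun k => by rw [real_inner_comm v (e k)]; ring)
  -- a uniform bound on exponentials
  have hexp_le : ∀ u : ℝ, 0 ≤ u → ∀ k, Real.exp (-u * lam k) ≤ 1 := by
    intro u hu k
    rw [show (1:ℝ) = Real.exp 0 from Real.exp_zero.symm]
    exact Real.exp_le_exp.mpr (by nlinarith [(hpos k).le])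
  -- pointwise identity for the norm
  have hpt : ∀ σ ∈ Set.Ioc (0:ℝ) s, ‖E (t-σ) v - E (s-σ) v‖^2
      = ∑' k, (Real.exp (-(t-σ)*lam k) - Real.exp (-(s-σ)*lam k))^2 * ⟪e k, v⟫^2 := by
    intro σ hσ
    have hts : 0 ≤ t - σ := by linarith [hσ.2]
    have hss : 0 ≤ s - σ := by linarith [hσ.2]
    have key : ∀ u : ℝ, 0 ≤ u → Summable fun k => (Real.exp (-u * lam k) * ⟪e k, v⟫)^2 := by
      intro u hu
      refine hcsum.of_nonneg_of_le (fun k => sq_nonneg _) (fun k => ?_)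
      have he1 := hexp_le u hu k
      have he0 := Real.exp_pos (-u * lam k)
      calc (Real.exp (-u * lam k) * ⟪e k, v⟫)^2
          = Real.exp (-u * lam k)^2 * ⟪e k, v⟫^2 := mul_pow _ _ _
        _ ≤ 1 * ⟪e k, v⟫^2 :=
            mul_le_mul_of_nonneg_right (by nlinarith) (sq_nonneg _)
        _ = ⟪e k, v⟫^2 := one_mul _
    have S1 := key (t-σ) hts
    have S2 := key (s-σ) hss
    have hd : Summable fun k =>
        ((Real.exp (-(t-σ)*lam k) - Real.exp (-(s-σ)*lam k)) * ⟪e k, v⟫)^2 := by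
      refine hcsum.of_nonneg_of_le (fun k => sq_nonneg _) (fun k => ?_)
      have h1 := hexp_le (t-σ) hts k
      have h2 := hexp_le (s-σ) hss k
      have h3 := Real.exp_pos (-(t-σ) * lam k)
      have h4 := Real.exp_pos (-(s-σ) * lam k)
      have hd1 : (Real.exp (-(t-σ)*lam k) - Real.exp (-(s-σ)*lam k))^2 ≤ 1 := by
        nlinarith [mul_pos h3 h4,
          mul_nonneg (by linarith : (0:ℝ) ≤ 1 - Real.exp (-(t-σ)*lam k))
            (by linarith : (0:ℝ) ≤ 1 - Real.exp (-(s-σ)*lam k))]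
      calc ((Real.exp (-(t-σ)*lam k) - Real.exp (-(s-σ)*lam k)) * ⟪e k, v⟫)^2
          = (Real.exp (-(t-σ)*lam k) - Real.exp (-(s-σ)*lam k))^2 * ⟪e k, v⟫^2 := mul_pow _ _ _
        _ ≤ 1 * ⟪e k, v⟫^2 := mul_le_mul_of_nonneg_right hd1 (sq_nonneg _)
        _ = ⟪e k, v⟫^2 := one_mul _
    have heq : E (t-σ) v - E (s-σ) v
        = ∑' k, ((Real.exp (-(t-σ)*lam k) - Real.exp (-(s-σ)*lam k)) * ⟪e k, v⟫) • e k := by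
      rw [hE, hE, ← Summable.tsum_sub (helper_hasSum e _ S1).summable (helper_hasSum e _ S2).summable]
      apply tsum_congr; intro k
      rw [sub_mul, sub_smul]
    rw [heq, helper_norm e _ hd]
    exact tsum_congr fun k => mul_pow _ _ _
  rw [intervalIntegral.integral_of_le hs,
    setIntegral_congr_fun measurableSet_Ioc hpt]
  -- interchange integral and sum
  have hmeas : ∀ k, AEStronglyMeasurable
      (fun σ => (Real.exp (-(t-σ)*lam k) - Real.exp (-(s-σ)*lam k))^2 * ⟪e k, v⟫^2)
      (volume.restrict (Set.Ioc (0:ℝ) s)) := by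
    intro k
    exact ((((Real.continuous_exp.comp (by continuity)).sub
      (Real.continuous_exp.comp (by continuity))).pow 2).mul continuous_const).aestronglyMeasurable
  have hbound : ∀ k, ∫⁻ σ in Set.Ioc (0:ℝ) s,
      ‖(Real.exp (-(t-σ)*lam k) - Real.exp (-(s-σ)*lam k))^2 * ⟪e k, v⟫^2‖₊
      ≤ ENNReal.ofReal (⟪e k, v⟫^2) * ENNReal.ofReal s := by
    intro k
    have hb : ∀ σ ∈ Set.Ioc (0:ℝ) s,
        (‖(Real.exp (-(t-σ)*lam k) - Real.exp (-(s-σ)*lam k))^2 * ⟪e k, v⟫^2‖₊ : ℝ≥0∞)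
        ≤ ENNReal.ofReal (⟪e k, v⟫^2) := by
      intro σ hσ
      have hts : 0 ≤ t - σ := by linarith [hσ.2]
      have hss : 0 ≤ s - σ := by linarith [hσ.2]
      have h1 := hexp_le (t-σ) hts k
      have h2 := hexp_le (s-σ) hss k
      have h3 := Real.exp_pos (-(t-σ) * lam k)
      have h4 := Real.exp_pos (-(s-σ) * lam k)
      have h1 := hexp_le (t-σ) hts k
      have h2 := hexp_le (s-σ) hss k
      have h3 := Real.exp_pos (-(t-σ) * lam k)
      have h4 := Real.exp_pos (-(s-σ) * lam k)
      have hd1 : (Real.exp (-(t-σ)*lam k) - Real.exp (-(s-σ)*lam k))^2 ≤ 1 := by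
        nlinarith [mul_pos h3 h4,
          mul_nonneg (by linarith : (0:ℝ) ≤ 1 - Real.exp (-(t-σ)*lam k))
            (by linarith : (0:ℝ) ≤ 1 - Real.exp (-(s-σ)*lam k))]
      have hgle : (Real.exp (-(t-σ)*lam k) - Real.exp (-(s-σ)*lam k))^2 * ⟪e k, v⟫^2
          ≤ ⟪e k, v⟫^2 := by
        calc (Real.exp (-(t-σ)*lam k) - Real.exp (-(s-σ)*lam k))^2 * ⟪e k, v⟫^2
            ≤ 1 * ⟪e k, v⟫^2 := mul_le_mul_of_nonneg_right hd1 (sq_nonneg _)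
          _ = ⟪e k, v⟫^2 := one_mul _
      have hg0 : 0 ≤ (Real.exp (-(t-σ)*lam k) - Real.exp (-(s-σ)*lam k))^2 * ⟪e k, v⟫^2 := by
        positivity
      rw [← enorm_eq_nnnorm, ← ofReal_norm, Real.norm_eq_abs, abs_of_nonneg hg0]
      exact ENNReal.ofReal_le_ofReal hgle
    calc ∫⁻ σ in Set.Ioc (0:ℝ) s,
        ‖(Real.exp (-(t-σ)*lam k) - Real.exp (-(s-σ)*lam k))^2 * ⟪e k, v⟫^2‖₊
        ≤ ∫⁻ _σ in Set.Ioc (0:ℝ) s, ENNReal.ofReal (⟪e k, v⟫^2) :=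
          setLIntegral_mono measurable_const hb
      _ = ENNReal.ofReal (⟪e k, v⟫^2) * volume (Set.Ioc (0:ℝ) s) := by
          rw [lintegral_const, Measure.restrict_apply_univ]
      _ = ENNReal.ofReal (⟪e k, v⟫^2) * ENNReal.ofReal s := by
          rw [Real.volume_Ioc, sub_zero]
  have hfin : ∑' k, ∫⁻ σ in Set.Ioc (0:ℝ) s,
      ‖(Real.exp (-(t-σ)*lam k) - Real.exp (-(s-σ)*lam k))^2 * ⟪e k, v⟫^2‖₊ ≠ ⊤ := by
    refine ne_top_of_le_ne_top ?_ (ENNReal.tsum_le_tsum hbound)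
    rw [ENNReal.tsum_mul_right, ← ENNReal.ofReal_tsum_of_nonneg (fun k => sq_nonneg _) hcsum]
    exact ENNReal.mul_ne_top ENNReal.ofReal_ne_top ENNReal.ofReal_ne_top
  rw [integral_tsum hmeas hfin]
  -- per-mode bound
  have permode : ∀ k, ∫ σ in Set.Ioc (0:ℝ) s,
      (Real.exp (-(t-σ)*lam k) - Real.exp (-(s-σ)*lam k))^2 * ⟪e k, v⟫^2
      ≤ (1/2) * ((t-s)^(1-2*η) * (lam k ^ (-(2*η)) * ⟪e k, v⟫^2)) := by
    intro k
    have hL := hpos k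
    rw [← intervalIntegral.integral_of_le hs]
    have hg_eq : ∀ σ : ℝ, (Real.exp (-(t-σ)*lam k) - Real.exp (-(s-σ)*lam k))^2 * ⟪e k, v⟫^2
        = (⟪e k, v⟫^2 * (1 - Real.exp (-(t-s)*lam k))^2)
          * Real.exp (2*lam k*σ - 2*lam k*s) := by
      intro σ
      have e1 : Real.exp (-(t-σ)*lam k)
          = Real.exp (-(s-σ)*lam k) * Real.exp (-(t-s)*lam k) := by
        rw [← Real.exp_add]; congr 1; ring
      have e2 : Real.exp (2*lam k*σ - 2*lam k*s)
          = Real.exp (-(s-σ)*lam k) * Real.exp (-(s-σ)*lam k) := by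
        rw [← Real.exp_add]; congr 1; ring
      rw [e1, e2]; ring
    simp only [hg_eq]
    rw [intervalIntegral.integral_const_mul]
    have hint := exp_integral_bound (lam k) s hL
    have hK0 : (0:ℝ) ≤ ⟪e k, v⟫^2 * (1 - Real.exp (-(t-s)*lam k))^2 := by positivity
    refine (mul_le_mul_of_nonneg_left hint hK0).trans ?_
    have hx0 : 0 ≤ (t-s) * lam k := mul_nonneg (by linarith) hL.le
    have hkey : (1 - Real.exp (-(t-s)*lam k))^2 ≤ ((t-s)*lam k)^(1-2*η) := by
      have h := one_sub_exp_sq_le hα0 hα1 hx0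
      rwa [← neg_mul] at h
    have hmulr : ((t-s)*lam k)^(1-2*η) = (t-s)^(1-2*η) * lam k^(1-2*η) :=
      Real.mul_rpow (by linarith) hL.le
    have hLpow : lam k^(1-2*η) * (1/(2*lam k)) = (1/2) * lam k^(-(2*η)) := by
      rw [show (1:ℝ)-2*η = -(2*η)+1 by ring, Real.rpow_add hL, Real.rpow_one]
      field_simp
    calc ⟪e k, v⟫^2 * (1 - Real.exp (-(t-s)*lam k))^2 * (1/(2*lam k))
        ≤ ⟪e k, v⟫^2 * ((t-s)^(1-2*η) * lam k^(1-2*η)) * (1/(2*lam k)) := by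
          rw [hmulr] at hkey
          have h2L : (0:ℝ) ≤ 1/(2*lam k) := by positivity
          exact mul_le_mul_of_nonneg_right
            (mul_le_mul_of_nonneg_left hkey (sq_nonneg _)) h2L
      _ = (1/2) * ((t-s)^(1-2*η) * (lam k ^ (-(2*η)) * ⟪e k, v⟫^2)) := by
          linear_combination (⟪e k, v⟫^2 * (t-s)^(1-2*η)) * hLpow
  -- sum up
  have hJ0 : ∀ k, 0 ≤ ∫ σ in Set.Ioc (0:ℝ) s,
      (Real.exp (-(t-σ)*lam k) - Real.exp (-(s-σ)*lam k))^2 * ⟪e k, v⟫^2 :=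
    fun k => setIntegral_nonneg measurableSet_Ioc (fun σ _ => by positivity)
  have hBsum : Summable fun k =>
      (1/2) * ((t-s)^(1-2*η) * (lam k ^ (-(2*η)) * ⟪e k, v⟫^2)) :=
    (hsum.mul_left _).mul_left _
  have hJsum : Summable fun k => ∫ σ in Set.Ioc (0:ℝ) s,
      (Real.exp (-(t-σ)*lam k) - Real.exp (-(s-σ)*lam k))^2 * ⟪e k, v⟫^2 :=
    Summable.of_nonneg_of_le hJ0 permode hBsum
  have hS0 : 0 ≤ ∑' k, lam k ^ (-(2*η)) * ⟪e k, v⟫^2 :=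
    tsum_nonneg (fun k => mul_nonneg (Real.rpow_nonneg (hpos k).le _) (sq_nonneg _))
  have hts0 : (0:ℝ) ≤ (t-s)^(1-2*η) := Real.rpow_nonneg (by linarith) _
  calc (∑' k, ∫ σ in Set.Ioc (0:ℝ) s,
        (Real.exp (-(t-σ)*lam k) - Real.exp (-(s-σ)*lam k))^2 * ⟪e k, v⟫^2)
      ≤ ∑' k, (1/2) * ((t-s)^(1-2*η) * (lam k ^ (-(2*η)) * ⟪e k, v⟫^2)) :=
        Summable.tsum_le_tsum permode hJsum hBsum
    _ = (1/2) * ((t-s)^(1-2*η) * ∑' k, lam k ^ (-(2*η)) * ⟪e k, v⟫^2) := by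
        rw [tsum_mul_left, tsum_mul_left]
    _ ≤ 1 * (t-s)^(1-2*η) * ∑' k, lam k ^ (-(2*η)) * ⟪e k, v⟫^2 := by
        nlinarith [mul_nonneg hts0 hS0]
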